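/- Let N be a positive integer and let H : ℝ → M_N(ℂ) be a continuous function whose values are Hermitian matrices, periodic with period 1 (H(k+1) = H(k) for all k), and such that the zero set Z = {k ∈ [0,1) : H(k) is not invertible} is finite. Then there exists ε₀ > 0 such that for all 0 < ε < ε₀: Σ_{k* ∈ Z} ( Sig(H(k*+ε)) − Sig(H(k*−ε)) ) = 0, where for an invertible Hermitian matrix A, Sig(A) denotes the number of positive eigenvalues minus the number of negative eigenvalues of A, counted with multiplicity. -/

import Mathlib

open Matrix

/-- The signature of a Hermitian matrix: number of positive eigenvalues minus number of
negative eigenvalues, counted with multiplicity. -/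
noncomputable def hermSig {N : ℕ} {A : Matrix (Fin N) (Fin N) ℂ} (hA : A.IsHermitian) : ℤ :=
  ((Finset.univ.filter fun i => 0 < hA.eigenvalues i).card : ℤ)
    - ((Finset.univ.filter fun i => hA.eigenvalues i < 0).card : ℤ)

open Finset
open scoped InnerProductSpace

section NNAux

variable {N : ℕ}

variable {N : ℕ}

noncomputable def qre {A : Matrix (Fin N) (Fin N) ℂ} (hA : A.IsHermitian)
    (x : EuclideanSpace ℂ (Fin N)) : ℝ :=
  ∑ i, hA.eigenvalues i * ‖hA.eigenvectorBasis.repr x i‖ ^ 2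

lemma toEuclideanLin_eigen {A : Matrix (Fin N) (Fin N) ℂ} (hA : A.IsHermitian) (j : Fin N) :
    Matrix.toEuclideanLin A (hA.eigenvectorBasis j) =
      (hA.eigenvalues j : ℂ) • hA.eigenvectorBasis j := by
  apply (WithLp.equiv 2 _).injective
  simp only [WithLp.equiv_apply, Matrix.ofLp_toEuclideanLin_apply]
  have := hA.mulVec_eigenvectorBasis j
  ext i
  simpa using congrFun this i

lemma re_inner_toEuclideanLin {A : Matrix (Fin N) (Fin N) ℂ} (hA : A.IsHermitian)
    (x : EuclideanSpace ℂ (Fin N)) :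
    RCLike.re (⟪x, Matrix.toEuclideanLin A x⟫_ℂ) = qre hA x := by
  set b := hA.eigenvectorBasis with hb
  have key : ⟪x, Matrix.toEuclideanLin A x⟫_ℂ
      = ∑ i, ((hA.eigenvalues i * ‖b.repr x i‖ ^ 2 : ℝ) : ℂ) := by
    rw [← b.sum_inner_mul_inner x (Matrix.toEuclideanLin A x)]
    refine Finset.sum_congr rfl fun i _ => ?_
    have hsymm := (Matrix.isHermitian_iff_isSymmetric.mp hA)
    have h1 : ⟪b i, Matrix.toEuclideanLin A x⟫_ℂ
        = (hA.eigenvalues i : ℂ) * ⟪b i, x⟫_ℂ := by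
      rw [← hsymm (b i) x, toEuclideanLin_eigen hA i, inner_smul_left]
      simp [hb]
    rw [h1, ← inner_conj_symm (b i) x]
    have h2 : b.repr x i = ⟪b i, x⟫_ℂ := b.repr_apply_apply x i
    rw [h2, ← inner_conj_symm x (b i), Complex.conj_conj, mul_left_comm,
      RCLike.conj_mul]
    rw [Complex.ofReal_mul, Complex.ofReal_pow]
    rfl
  rw [key, qre]
  rw [map_sum]
  simp [← Complex.ofReal_pow, hb]

lemma norm_sq_eq_sum_repr {A : Matrix (Fin N) (Fin N) ℂ} (hA : A.IsHermitian)
    (x : EuclideanSpace ℂ (Fin N)) :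
    ‖x‖ ^ 2 = ∑ i, ‖hA.eigenvectorBasis.repr x i‖ ^ 2 := by
  rw [← hA.eigenvectorBasis.repr.norm_map x, EuclideanSpace.norm_eq,
    Real.sq_sqrt (by positivity)]

noncomputable def eigSpan {A : Matrix (Fin N) (Fin N) ℂ} (hA : A.IsHermitian)
    (S : Finset (Fin N)) : Submodule ℂ (EuclideanSpace ℂ (Fin N)) :=
  Submodule.span ℂ (Set.range fun i : S => hA.eigenvectorBasis i)

lemma finrank_eigSpan {A : Matrix (Fin N) (Fin N) ℂ} (hA : A.IsHermitian)
    (S : Finset (Fin N)) : Module.finrank ℂ (eigSpan hA S) = S.card := by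
  have : (Set.range fun i : S => hA.eigenvectorBasis i)
      = Set.range (⇑hA.eigenvectorBasis ∘ Subtype.val) := rfl
  rw [eigSpan, this, finrank_span_eq_card
    ((hA.eigenvectorBasis.orthonormal.comp _ Subtype.val_injective).linearIndependent)]
  simp

lemma repr_eq_zero_of_mem_eigSpan {A : Matrix (Fin N) (Fin N) ℂ} (hA : A.IsHermitian)
    {S : Finset (Fin N)} {x : EuclideanSpace ℂ (Fin N)} (hx : x ∈ eigSpan hA S)
    {i : Fin N} (hi : i ∉ S) : hA.eigenvectorBasis.repr x i = 0 := by
  rw [hA.eigenvectorBasis.repr_apply_apply]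
  induction hx using Submodule.span_induction with
  | mem y hy =>
    obtain ⟨j, rfl⟩ := hy
    exact hA.eigenvectorBasis.orthonormal.2 (fun h => hi (h ▸ j.2))
  | zero => simp
  | add y z _ _ hy hz => rw [inner_add_right, hy, hz, add_zero]
  | smul c y _ hy => rw [inner_smul_right, hy, mul_zero]

lemma qre_of_mem_eigSpan {A : Matrix (Fin N) (Fin N) ℂ} (hA : A.IsHermitian)
    {S : Finset (Fin N)} {x : EuclideanSpace ℂ (Fin N)} (hx : x ∈ eigSpan hA S) :
    qre hA x = ∑ i ∈ S, hA.eigenvalues i * ‖hA.eigenvectorBasis.repr x i‖ ^ 2 := by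
  rw [qre, ← Finset.sum_subset (Finset.subset_univ S)]
  intro i _ hi
  rw [repr_eq_zero_of_mem_eigSpan hA hx hi]
  simp

lemma norm_sq_of_mem_eigSpan {A : Matrix (Fin N) (Fin N) ℂ} (hA : A.IsHermitian)
    {S : Finset (Fin N)} {x : EuclideanSpace ℂ (Fin N)} (hx : x ∈ eigSpan hA S) :
    ‖x‖ ^ 2 = ∑ i ∈ S, ‖hA.eigenvectorBasis.repr x i‖ ^ 2 := by
  rw [norm_sq_eq_sum_repr hA, ← Finset.sum_subset (Finset.subset_univ S)]
  intro i _ hi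
  rw [repr_eq_zero_of_mem_eigSpan hA hx hi]
  simp

lemma euclidean_coord_le_norm (x : EuclideanSpace ℂ (Fin N)) (i : Fin N) : ‖x i‖ ≤ ‖x‖ := by
  have h1 : ‖x i‖ ^ 2 ≤ ∑ j, ‖x j‖ ^ 2 :=
    Finset.single_le_sum (f := fun j => ‖x j‖ ^ 2) (fun j _ => by positivity)
      (Finset.mem_univ i)
  have h2 : ‖x‖ ^ 2 = ∑ j, ‖x j‖ ^ 2 := by
    rw [EuclideanSpace.norm_eq, Real.sq_sqrt (by positivity)]
  nlinarith [norm_nonneg (x i), norm_nonneg x]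

lemma inner_toEuclideanLin_bound (M : Matrix (Fin N) (Fin N) ℂ)
    (x : EuclideanSpace ℂ (Fin N)) :
    ‖⟪x, Matrix.toEuclideanLin M x⟫_ℂ‖ ≤ (∑ i, ∑ j, ‖M i j‖) * ‖x‖ ^ 2 := by
  have expand : ⟪x, Matrix.toEuclideanLin M x⟫_ℂ
      = ∑ i, ∑ j, (starRingEnd ℂ) (x i) * (M i j * x j) := by
    rw [PiLp.inner_apply]
    refine Finset.sum_congr rfl fun i _ => ?_
    rw [RCLike.inner_apply]
    have : (Matrix.toEuclideanLin M x) i = ∑ j, M i j * x j := rfl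
    rw [this, Finset.sum_mul]
    exact Finset.sum_congr rfl fun j _ => mul_comm _ _
  rw [expand, Finset.sum_mul]
  refine (norm_sum_le _ _).trans (Finset.sum_le_sum fun i _ => ?_)
  rw [Finset.sum_mul]
  refine (norm_sum_le _ _).trans (Finset.sum_le_sum fun j _ => ?_)
  rw [norm_mul, norm_mul, RCLike.norm_conj, pow_two]
  calc ‖x i‖ * (‖M i j‖ * ‖x j‖) ≤ ‖x‖ * (‖M i j‖ * ‖x‖) := by
        gcongr <;> [exact euclidean_coord_le_norm x i; exact euclidean_coord_le_norm x j]
    _ = ‖M i j‖ * (‖x‖ * ‖x‖) := by ring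

lemma qre_sub_qre {A B : Matrix (Fin N) (Fin N) ℂ} (hA : A.IsHermitian) (hB : B.IsHermitian)
    (x : EuclideanSpace ℂ (Fin N)) :
    |qre hB x - qre hA x| ≤ (∑ i, ∑ j, ‖(B - A) i j‖) * ‖x‖ ^ 2 := by
  rw [← re_inner_toEuclideanLin hA x, ← re_inner_toEuclideanLin hB x]
  have h1 : RCLike.re (⟪x, Matrix.toEuclideanLin B x⟫_ℂ)
      - RCLike.re (⟪x, Matrix.toEuclideanLin A x⟫_ℂ)
      = RCLike.re (⟪x, Matrix.toEuclideanLin (B - A) x⟫_ℂ) := by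
    rw [map_sub, LinearMap.sub_apply, inner_sub_right, map_sub]
  rw [h1]
  exact (RCLike.abs_re_le_norm _).trans (inner_toEuclideanLin_bound _ x)

lemma count_le_count {A B : Matrix (Fin N) (Fin N) ℂ} (hA : A.IsHermitian)
    (hB : B.IsHermitian) {μ : ℝ} (hμ : ∀ i, μ ≤ |hA.eigenvalues i|)
    (hclose : ∑ i, ∑ j, ‖(B - A) i j‖ < μ) :
    ((Finset.univ.filter fun i => 0 < hA.eigenvalues i).card
        ≤ (Finset.univ.filter fun i => 0 < hB.eigenvalues i).card)
      ∧ ((Finset.univ.filter fun i => hA.eigenvalues i < 0).card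
        ≤ (Finset.univ.filter fun i => hB.eigenvalues i < 0).card) := by
  have hd : (0:ℝ) ≤ ∑ i, ∑ j, ‖(B - A) i j‖ := by positivity
  constructor
  · set S := Finset.univ.filter fun i => 0 < hA.eigenvalues i with hS
    set T := Finset.univ.filter fun j => ¬ 0 < hB.eigenvalues j with hT
    have hPQ : eigSpan hA S ⊓ eigSpan hB T = ⊥ := by
      rw [Submodule.eq_bot_iff]
      rintro x ⟨hxP, hxQ⟩
      by_contra hx
      have hxn : (0:ℝ) < ‖x‖ ^ 2 := pow_pos (norm_pos_iff.mpr hx) 2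
      have h1 : μ * ‖x‖ ^ 2 ≤ qre hA x := by
        rw [qre_of_mem_eigSpan hA hxP, norm_sq_of_mem_eigSpan hA hxP, Finset.mul_sum]
        refine Finset.sum_le_sum fun i hi => ?_
        have hpos : 0 < hA.eigenvalues i := (Finset.mem_filter.mp hi).2
        have : μ ≤ hA.eigenvalues i := by
          have h := hμ i; rwa [abs_of_pos hpos] at h
        have hn : (0:ℝ) ≤ ‖hA.eigenvectorBasis.repr x i‖ ^ 2 := by positivity
        exact mul_le_mul_of_nonneg_right this hn
      have h2 : qre hB x ≤ 0 := by
        rw [qre_of_mem_eigSpan hB hxQ]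
        refine Finset.sum_nonpos fun j hj => ?_
        have hneg : ¬ 0 < hB.eigenvalues j := (Finset.mem_filter.mp hj).2
        exact mul_nonpos_of_nonpos_of_nonneg (le_of_not_gt hneg) (by positivity)
      have h3 := qre_sub_qre hA hB x
      have h4 : (∑ i, ∑ j, ‖(B - A) i j‖) * ‖x‖ ^ 2 < μ * ‖x‖ ^ 2 :=
        mul_lt_mul_of_pos_right hclose hxn
      rw [abs_le] at h3
      linarith [h3.1]
    have hdim := Submodule.finrank_sup_add_finrank_inf_eq (eigSpan hA S) (eigSpan hB T)
    rw [hPQ, finrank_eigSpan, finrank_eigSpan] at hdim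
    have hle : Module.finrank ℂ ↥(eigSpan hA S ⊔ eigSpan hB T) ≤ N := by
      have := Submodule.finrank_le (eigSpan hA S ⊔ eigSpan hB T)
      simpa using this
    have hcardT' : (Finset.univ.filter fun j => 0 < hB.eigenvalues j).card + T.card = N := by
      rw [hT]
      simpa using Finset.card_filter_add_card_filter_not
        (s := (Finset.univ : Finset (Fin N))) (p := fun j => 0 < hB.eigenvalues j)
    rw [finrank_bot ℂ (EuclideanSpace ℂ (Fin N)), add_zero] at hdim
    omega
  · set S := Finset.univ.filter fun i => hA.eigenvalues i < 0 with hS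
    set T := Finset.univ.filter fun j => ¬ hB.eigenvalues j < 0 with hT
    have hPQ : eigSpan hA S ⊓ eigSpan hB T = ⊥ := by
      rw [Submodule.eq_bot_iff]
      rintro x ⟨hxP, hxQ⟩
      by_contra hx
      have hxn : (0:ℝ) < ‖x‖ ^ 2 := pow_pos (norm_pos_iff.mpr hx) 2
      have h1 : qre hA x ≤ -μ * ‖x‖ ^ 2 := by
        rw [qre_of_mem_eigSpan hA hxP, norm_sq_of_mem_eigSpan hA hxP, Finset.mul_sum]
        refine Finset.sum_le_sum fun i hi => ?_
        have hneg : hA.eigenvalues i < 0 := (Finset.mem_filter.mp hi).2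
        have : hA.eigenvalues i ≤ -μ := by
          have := hμ i
          rw [abs_of_neg hneg] at this
          linarith
        have hn : (0:ℝ) ≤ ‖hA.eigenvectorBasis.repr x i‖ ^ 2 := by positivity
        exact mul_le_mul_of_nonneg_right this hn
      have h2 : 0 ≤ qre hB x := by
        rw [qre_of_mem_eigSpan hB hxQ]
        refine Finset.sum_nonneg fun j hj => ?_
        have hpos : ¬ hB.eigenvalues j < 0 := (Finset.mem_filter.mp hj).2
        exact mul_nonneg (le_of_not_gt hpos) (by positivity)
      have h3 := qre_sub_qre hA hB x
      have h4 : (∑ i, ∑ j, ‖(B - A) i j‖) * ‖x‖ ^ 2 < μ * ‖x‖ ^ 2 :=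
        mul_lt_mul_of_pos_right hclose hxn
      rw [abs_le] at h3
      nlinarith [h3.2]
    have hdim := Submodule.finrank_sup_add_finrank_inf_eq (eigSpan hA S) (eigSpan hB T)
    rw [hPQ, finrank_eigSpan, finrank_eigSpan] at hdim
    have hle : Module.finrank ℂ ↥(eigSpan hA S ⊔ eigSpan hB T) ≤ N := by
      have := Submodule.finrank_le (eigSpan hA S ⊔ eigSpan hB T)
      simpa using this
    have hcardT' : (Finset.univ.filter fun j => hB.eigenvalues j < 0).card + T.card = N := by
      rw [hT]
      simpa using Finset.card_filter_add_card_filter_not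
        (s := (Finset.univ : Finset (Fin N))) (p := fun j => hB.eigenvalues j < 0)
    rw [finrank_bot ℂ (EuclideanSpace ℂ (Fin N)), add_zero] at hdim
    omega

lemma eigenvalues_ne_zero_of_isUnit {A : Matrix (Fin N) (Fin N) ℂ} (hA : A.IsHermitian)
    (hAu : IsUnit A) (i : Fin N) : hA.eigenvalues i ≠ 0 := by
  intro h
  have hdet : IsUnit A.det := (Matrix.isUnit_iff_isUnit_det A).mp hAu
  rw [hA.det_eq_prod_eigenvalues] at hdet
  rw [isUnit_iff_ne_zero] at hdet
  exact hdet (Finset.prod_eq_zero (Finset.mem_univ i) (by rw [h]; simp))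

lemma card_add_card_eq {A : Matrix (Fin N) (Fin N) ℂ} (hA : A.IsHermitian) (hAu : IsUnit A) :
    (Finset.univ.filter fun i => 0 < hA.eigenvalues i).card
      + (Finset.univ.filter fun i => hA.eigenvalues i < 0).card = N := by
  have h : (Finset.univ.filter fun i => hA.eigenvalues i < 0)
      = (Finset.univ.filter fun i => ¬ 0 < hA.eigenvalues i) := by
    refine Finset.filter_congr fun i _ => ?_
    have := eigenvalues_ne_zero_of_isUnit hA hAu i
    constructor <;> intro hlt
    · linarith
    · cases (lt_or_gt_of_ne this) with
      | inl h => exact h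
      | inr h => exact absurd h hlt
  rw [h]
  simpa using Finset.card_filter_add_card_filter_not
    (s := (Finset.univ : Finset (Fin N))) (p := fun i => 0 < hA.eigenvalues i)

/-- The key stability result: hermSig-like data is stable under small perturbations. -/
theorem hermSig_stable {A : Matrix (Fin N) (Fin N) ℂ} (hA : A.IsHermitian) (hAu : IsUnit A)
    (hN : 0 < N) :
    ∃ δ > (0:ℝ), ∀ B : Matrix (Fin N) (Fin N) ℂ, ∀ hB : B.IsHermitian, IsUnit B →
      (∑ i, ∑ j, ‖(B - A) i j‖) < δ →
      ((Finset.univ.filter fun i => 0 < hB.eigenvalues i).card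
          = (Finset.univ.filter fun i => 0 < hA.eigenvalues i).card
        ∧ (Finset.univ.filter fun i => hB.eigenvalues i < 0).card
          = (Finset.univ.filter fun i => hA.eigenvalues i < 0).card) := by
  have hne : (Finset.univ : Finset (Fin N)).Nonempty := ⟨⟨0, hN⟩, Finset.mem_univ _⟩
  set μ := Finset.univ.inf' hne fun i => |hA.eigenvalues i| with hμdef
  have hμpos : 0 < μ := by
    rw [hμdef, Finset.lt_inf'_iff]
    intro i _
    exact abs_pos.mpr (eigenvalues_ne_zero_of_isUnit hA hAu i)
  refine ⟨μ, hμpos, fun B hB hBu hclose => ?_⟩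
  have hμle : ∀ i, μ ≤ |hA.eigenvalues i| := fun i =>
    Finset.inf'_le _ (Finset.mem_univ i)
  obtain ⟨h1, h2⟩ := count_le_count hA hB hμle hclose
  have hA' := card_add_card_eq hA hAu
  have hB' := card_add_card_eq hB hBu
  omega

lemma hermSig_congr {A B : Matrix (Fin N) (Fin N) ℂ} (hA : A.IsHermitian)
    (hB : B.IsHermitian) (h : A = B) : hermSig hA = hermSig hB := by
  subst h; rfl

lemma eventually_hermSig_eq (hN : 0 < N) (H : ℝ → Matrix (Fin N) (Fin N) ℂ)
    (hcont : Continuous H) (hherm : ∀ k, (H k).IsHermitian) (t₀ : ℝ) (ht₀ : IsUnit (H t₀)) :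
    ∀ᶠ t in nhds t₀, hermSig (hherm t) = hermSig (hherm t₀) := by
  obtain ⟨δ, hδ, hstab⟩ := hermSig_stable (hherm t₀) ht₀ hN
  have hunit : ∀ᶠ t in nhds t₀, IsUnit (H t) := by
    have hdet : Continuous fun t => (H t).det := hcont.matrix_det
    have h0 : (H t₀).det ≠ 0 := by
      have := (Matrix.isUnit_iff_isUnit_det _).mp ht₀
      exact isUnit_iff_ne_zero.mp this
    filter_upwards [hdet.continuousAt.eventually_ne h0] with t ht
    exact (Matrix.isUnit_iff_isUnit_det _).mpr (isUnit_iff_ne_zero.mpr ht)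
  have hg : Continuous fun t => ∑ i, ∑ j, ‖(H t - H t₀) i j‖ := by
    refine continuous_finset_sum _ fun i _ => continuous_finset_sum _ fun j _ => ?_
    have : Continuous fun t => H t i j :=
      (continuous_apply j).comp ((continuous_apply i).comp hcont)
    exact (this.sub continuous_const).norm
  have hclose : ∀ᶠ t in nhds t₀, (∑ i, ∑ j, ‖(H t - H t₀) i j‖) < δ := by
    have h0 : (∑ i, ∑ j, ‖(H t₀ - H t₀) i j‖) < δ := by simpa using hδ
    exact hg.continuousAt.eventually_lt continuousAt_const h0
  filter_upwards [hunit, hclose] with t h1 h2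
  have h3 := hstab (H t) (hherm t) h1 h2
  unfold hermSig
  rw [h3.1, h3.2]

lemma hermSig_const_on (hN : 0 < N) (H : ℝ → Matrix (Fin N) (Fin N) ℂ)
    (hcont : Continuous H) (hherm : ∀ k, (H k).IsHermitian) {a b : ℝ} (hab : a ≤ b)
    (hU : ∀ t ∈ Set.Icc a b, IsUnit (H t)) :
    hermSig (hherm a) = hermSig (hherm b) := by
  haveI : PreconnectedSpace (Set.Icc a b) := Subtype.preconnectedSpace isPreconnected_Icc
  set g : Set.Icc a b → ℤ := fun t => hermSig (hherm t) with hg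
  have hlc : IsLocallyConstant g := by
    rw [IsLocallyConstant.iff_eventually_eq]
    intro x
    have hev := eventually_hermSig_eq hN H hcont hherm x (hU x x.2)
    exact (continuous_subtype_val.tendsto x).eventually hev
  exact (hlc.apply_eq_of_preconnectedSpace ⟨b, Set.right_mem_Icc.mpr hab⟩
    ⟨a, Set.left_mem_Icc.mpr hab⟩).symm

end NNAux

/-- one-dimensional Nielsen–Ninomiya theorem: the signature jumps of a periodic
continuous Hermitian family at its finitely many gap-closing points in one period sum to zero. -/
theorem nielsen_ninomiya_one_dim
    (N : ℕ) (hN : 0 < N) (H : ℝ → Matrix (Fin N) (Fin N) ℂ)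
    (hcont : Continuous H) (hherm : ∀ k, (H k).IsHermitian)
    (hper : ∀ k, H (k + 1) = H k)
    (Z : Set ℝ) (hZdef : Z = {k | k ∈ Set.Ico (0 : ℝ) 1 ∧ ¬ IsUnit (H k)})
    (hZfin : Z.Finite) :
    ∃ ε₀ > (0 : ℝ), ∀ ε : ℝ, 0 < ε → ε < ε₀ →
      ∑ k ∈ hZfin.toFinset,
        (hermSig (hherm (k + ε)) - hermSig (hherm (k - ε))) = 0 := by
  classical
  set F := hZfin.toFinset with hF
  have hmemF : ∀ k, k ∈ F ↔ (k ∈ Set.Ico (0:ℝ) 1 ∧ ¬ IsUnit (H k)) := by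
    intro k; rw [hF, Set.Finite.mem_toFinset, hZdef]; rfl
  have hunit : ∀ t : ℝ, 0 ≤ t → t < 1 → t ∉ F → IsUnit (H t) := by
    intro t h0 h1 hft
    by_contra hu
    exact hft ((hmemF t).mpr ⟨⟨h0, h1⟩, hu⟩)
  by_cases hFe : F = ∅
  · exact ⟨1, one_pos, fun ε _ _ => by rw [hFe, Finset.sum_empty]⟩
  · have hn : 0 < F.card := Finset.card_pos.mpr (Finset.nonempty_of_ne_empty hFe)
    set n := F.card with hncard
    haveI : NeZero n := ⟨hn.ne'⟩
    set e := F.orderIsoOfFin hncard.symm with he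
    set z : Fin n → ℝ := fun i => (e i : ℝ) with hz
    have hzmono : StrictMono z := fun i j hij => Subtype.coe_lt_coe.mpr (e.strictMono hij)
    have hzF : ∀ i, z i ∈ F := fun i => (e i).2
    have hz0 : ∀ i, 0 ≤ z i ∧ z i < 1 := fun i => ((hmemF _).mp (hzF i)).1
    have hFz : ∀ k ∈ F, ∃ i, z i = k := by
      intro k hk
      obtain ⟨i, hi⟩ := e.surjective ⟨k, hk⟩
      exact ⟨i, congrArg Subtype.val hi⟩
    set i₀ : Fin n := ⟨0, hn⟩ with hi₀
    set gap : Fin n → ℝ :=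
      fun i => (if h : (i:ℕ)+1 < n then z ⟨(i:ℕ)+1, h⟩ else z i₀ + 1) - z i with hgapdef
    have hgap : ∀ i, 0 < gap i := by
      intro i
      rw [hgapdef]; dsimp only
      split
      · next h =>
          have := hzmono (show i < ⟨(i:ℕ)+1, h⟩ from Fin.lt_def.mpr (by simp))
          linarith
      · have h1 := (hz0 i).2; have h2 := (hz0 i₀).1; linarith
    refine ⟨(Finset.univ.inf' ⟨i₀, Finset.mem_univ _⟩ gap) / 2, by
      apply div_pos _ two_pos
      exact (Finset.lt_inf'_iff _).2 fun i _ => hgap i, fun ε hε hεlt => ?_⟩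
    have h2ε : ∀ i, 2 * ε < gap i := by
      intro i
      have h1 := Finset.inf'_le gap (Finset.mem_univ i)
      linarith
    have hIu : ∀ i : Fin n, ∀ t : ℝ, z i < t → t < z i + gap i → IsUnit (H t) := by
      intro i t ht1 ht2
      rw [hgapdef] at ht2; dsimp only at ht2
      by_cases h : (i:ℕ)+1 < n
      · rw [dif_pos h] at ht2
        have ht2' : t < z ⟨(i:ℕ)+1, h⟩ := by linarith
        apply hunit t (le_of_lt (lt_of_le_of_lt (hz0 i).1 ht1)) (lt_trans ht2' (hz0 _).2)
        intro htF
        obtain ⟨j, hj⟩ := hFz t htF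
        have hj1 : (i:ℕ) < (j:ℕ) := hzmono.lt_iff_lt.mp (hj ▸ ht1)
        have hj2 : (j:ℕ) < (i:ℕ)+1 := hzmono.lt_iff_lt.mp (hj ▸ ht2')
        omega
      · rw [dif_neg h] at ht2
        have htop : ∀ j : Fin n, z j ≤ z i := by
          intro j
          refine hzmono.monotone (Fin.le_def.mpr ?_)
          have h2 := j.2
          omega
        by_cases ht : t < 1
        · apply hunit t (le_of_lt (lt_of_le_of_lt (hz0 i).1 ht1)) ht
          intro htF
          obtain ⟨j, hj⟩ := hFz t htF
          have := htop j; rw [hj] at this; linarith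
        · have hH : H t = H (t-1) := by
            have := hper (t-1); rw [sub_add_cancel] at this; exact this
          rw [hH]
          have hbot : ∀ j : Fin n, z i₀ ≤ z j := by
            intro j
            refine hzmono.monotone (Fin.le_def.mpr ?_)
            have hv : (i₀ : ℕ) = 0 := rfl
            omega
          apply hunit (t-1) (by linarith) (by have := (hz0 i₀).2; linarith)
          intro htF
          obtain ⟨j, hj⟩ := hFz (t-1) htF
          have := hbot j; rw [hj] at this; linarith
    have hstep : ∀ i : Fin n,
        hermSig (hherm (z i + ε)) = hermSig (hherm (z i + gap i - ε)) := by
      intro i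
      have h2 := h2ε i
      apply hermSig_const_on hN H hcont hherm (by linarith)
      intro t ht
      exact hIu i t (by have := ht.1; linarith) (by have := ht.2; linarith)
    have hsucc : ∀ i : Fin n,
        hermSig (hherm (z i + gap i - ε)) = hermSig (hherm (z (i+1) - ε)) := by
      intro i
      by_cases h : (i:ℕ)+1 < n
      · have e1 : ((1:Fin n):ℕ) = 1 := by
          rw [Fin.val_one']; exact Nat.mod_eq_of_lt (by omega)
        have h1 : (i+1 : Fin n) = ⟨(i:ℕ)+1, h⟩ := by
          apply Fin.ext; rw [Fin.val_add, e1]; exact Nat.mod_eq_of_lt h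
        rw [h1]
        refine hermSig_congr _ _ (congrArg H ?_)
        rw [hgapdef]; dsimp only; rw [dif_pos h]; ring
      · have hival : (i:ℕ) = n - 1 := by have := i.2; omega
        have h0 : (i+1 : Fin n) = i₀ := by
          apply Fin.ext
          rw [Fin.val_add, Fin.val_one']
          have h4 : (i:ℕ) + 1 = n := by have := i.2; omega
          have : ((i:ℕ) + 1 % n) % n = 0 := by
            calc ((i:ℕ) + 1 % n) % n = ((i:ℕ) % n + 1 % n) % n := by
                  rw [Nat.mod_eq_of_lt i.2]
              _ = ((i:ℕ) + 1) % n := (Nat.add_mod _ _ _).symm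
              _ = n % n := by rw [h4]
              _ = 0 := Nat.mod_self n
          rw [this]
        rw [h0]
        have heq : z i + gap i - ε = (z i₀ - ε) + 1 := by
          rw [hgapdef]; dsimp only; rw [dif_neg h]; ring
        calc hermSig (hherm (z i + gap i - ε))
            = hermSig (hherm ((z i₀ - ε) + 1)) := hermSig_congr _ _ (by rw [heq])
          _ = hermSig (hherm (z i₀ - ε)) := hermSig_congr _ _ (hper _)
    have hFim : F = Finset.image z Finset.univ := by
      apply Finset.Subset.antisymm
      · intro k hk
        obtain ⟨i, hi⟩ := hFz k hk
        exact Finset.mem_image.mpr ⟨i, Finset.mem_univ i, hi⟩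
      · intro k hk
        obtain ⟨i, _, hi⟩ := Finset.mem_image.mp hk
        exact hi ▸ hzF i
    rw [hFim, Finset.sum_image (fun i _ j _ h => hzmono.injective h)]
    have hrw : ∑ i : Fin n, (hermSig (hherm (z i + ε)) - hermSig (hherm (z i - ε)))
        = ∑ i : Fin n, (hermSig (hherm (z (i+1) - ε)) - hermSig (hherm (z i - ε))) := by
      refine Finset.sum_congr rfl fun i _ => ?_
      rw [hstep i, hsucc i]
    rw [hrw, Finset.sum_sub_distrib]
    have hshift : ∑ i : Fin n, hermSig (hherm (z (i+1) - ε))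
        = ∑ i : Fin n, hermSig (hherm (z i - ε)) :=
      Equiv.sum_comp (Equiv.addRight (1 : Fin n)) (fun i => hermSig (hherm (z i - ε)))
    rw [hshift, sub_self]
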